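/- For every integer n ≥ 1 and every t ∈ ℕ, ∑_{(x_1,…,x_n) ∈ ℕ^n, x_1+⋯+x_n = t} ∏_{i=1}^n p(x_i) = A_n(t); that is, the n-fold convolution of the polynomial factor p equals the multinomial-mixture coefficient A_n(t). -/

import Mathlib

open scoped BigOperators

/-- `p x = ∑_{k=1}^r a_{k-1} (k-1)! C(x+k-1, x)` (index shifted: `k ∈ range r` stands for `k-1`). -/
noncomputable def p (r : ℕ) (a : ℕ → ℝ) (x : ℕ) : ℝ :=
  ∑ k ∈ Finset.range r, a k * (Nat.factorial k : ℝ) * (Nat.choose (x + k) x : ℝ)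

/-- `h θ = 1 / ∑_{k=1}^r a_{k-1} (k-1)! / θ^k` (index shifted). -/
noncomputable def h (r : ℕ) (a : ℕ → ℝ) (θ : ℝ) : ℝ :=
  1 / ∑ k ∈ Finset.range r, a k * (Nat.factorial k : ℝ) / θ ^ (k + 1)

/-- `A n t = ∑_{y₁+⋯+y_r = n} (n!/(y₁!⋯y_r!)) (∏_{k=1}^r (a_{k-1}(k-1)!)^{y_k})
    C(t + ∑_{k=1}^r k y_k − 1, t)`. -/
noncomputable def A (r : ℕ) (a : ℕ → ℝ) (n t : ℕ) : ℝ :=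
  ∑ y ∈ Finset.Nat.antidiagonalTuple r n,
    ((Nat.factorial n : ℝ) / ∏ k : Fin r, (Nat.factorial (y k) : ℝ)) *
      (∏ k : Fin r, (a (k : ℕ) * (Nat.factorial (k : ℕ) : ℝ)) ^ (y k)) *
      (Nat.choose (t + (∑ k : Fin r, ((k : ℕ) + 1) * y k) - 1) t : ℝ)

open PowerSeries Finset

lemma sum_finsuppAntidiag_eq {ι : Type*} [DecidableEq ι] (s : Finset ι) (n : ℕ)
    (F : (ι → ℕ) → ℝ) :
    ∑ l ∈ Finset.finsuppAntidiag s n, F ⇑l = ∑ f ∈ Finset.piAntidiag s n, F f := by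
  rw [Finset.finsuppAntidiag, Finset.sum_map]
  exact Finset.sum_attach _ fun f => F f

lemma invOneSubPow_prod (r : ℕ) (y : Fin r → ℕ) :
    ∏ k : Fin r, (PowerSeries.invOneSubPow ℝ ((k : ℕ) + 1)) ^ (y k)
      = PowerSeries.invOneSubPow ℝ (∑ k : Fin r, ((k : ℕ) + 1) * y k) := by
  simp_rw [invOneSubPow_eq_inv_one_sub_pow, ← pow_mul]
  rw [Finset.prod_pow_eq_pow_sum]

lemma mk_p_eq (r : ℕ) (a : ℕ → ℝ) :
    PowerSeries.mk (p r a) =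
      ∑ k : Fin r, PowerSeries.C (a k * (Nat.factorial (k : ℕ) : ℝ)) *
        (PowerSeries.invOneSubPow ℝ ((k : ℕ) + 1)).val := by
  ext d
  simp only [coeff_mk, map_sum, invOneSubPow_val_succ_eq_mk_add_choose, coeff_C_mul, coeff_mk, p]
  rw [← Fin.sum_univ_eq_sum_range
    (fun k => a k * (Nat.factorial k : ℝ) * (Nat.choose (d + k) d : ℝ)) r]
  refine Finset.sum_congr rfl fun k _ => ?_
  congr 1
  norm_cast
  rw [add_comm]
  exact (Nat.choose_symm_add).symm

/-- For every integer `n ≥ 1` and every `t ∈ ℕ`,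
`∑_{x₁+⋯+x_n = t} ∏_{i=1}^n p(x_i) = A_n(t)`: the `n`-fold convolution of the polynomial
factor `p` equals the multinomial-mixture coefficient `A_n(t)`. -/
theorem p_convolution_eq_A (r : ℕ) (hr : 1 ≤ r) (a : ℕ → ℝ) (ha : ∀ k, 0 ≤ a k)
    (n : ℕ) (hn : 1 ≤ n) (t : ℕ) :
    ∑ x ∈ Finset.Nat.antidiagonalTuple n t, ∏ i, p r a (x i) = A r a n t := by
  classical
  have hL : ∑ x ∈ Finset.Nat.antidiagonalTuple n t, ∏ i, p r a (x i)
      = PowerSeries.coeff t ((PowerSeries.mk (p r a)) ^ n) := by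
    have hprod : (PowerSeries.mk (p r a)) ^ n = ∏ _i : Fin n, PowerSeries.mk (p r a) := by
      simp
    rw [hprod, PowerSeries.coeff_prod]
    simp only [coeff_mk]
    rw [sum_finsuppAntidiag_eq Finset.univ t (fun x => ∏ i : Fin n, p r a (x i)),
      Finset.piAntidiag_univ_fin_eq_antidiagonalTuple]
  rw [hL, mk_p_eq, Finset.sum_pow_eq_sum_piAntidiag, map_sum, A,
    ← Finset.piAntidiag_univ_fin_eq_antidiagonalTuple]
  refine Finset.sum_congr rfl fun y hy => ?_
  obtain ⟨hysum, -⟩ := Finset.mem_piAntidiag.1 hy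
  set m := ∑ k : Fin r, ((k : ℕ) + 1) * y k with hm
  have hm1 : 1 ≤ m := by
    have hnm : n ≤ m := by
      rw [← hysum, hm]
      exact Finset.sum_le_sum fun k _ => Nat.le_mul_of_pos_left (y k) k.succ_pos
    omega
  have hprod2 : ∏ k : Fin r,
      (PowerSeries.C (a k * (Nat.factorial (k : ℕ) : ℝ)) *
        (PowerSeries.invOneSubPow ℝ ((k : ℕ) + 1)).val) ^ (y k)
      = PowerSeries.C (∏ k : Fin r, (a k * (Nat.factorial (k : ℕ) : ℝ)) ^ (y k)) *
        (PowerSeries.invOneSubPow ℝ m).val := by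
    have step1 : ∀ k : Fin r,
        (PowerSeries.C (a k * (Nat.factorial (k : ℕ) : ℝ)) *
          (PowerSeries.invOneSubPow ℝ ((k : ℕ) + 1)).val) ^ (y k)
        = PowerSeries.C ((a k * (Nat.factorial (k : ℕ) : ℝ)) ^ (y k)) *
          ((PowerSeries.invOneSubPow ℝ ((k : ℕ) + 1)) ^ (y k)).val := by
      intro k
      rw [mul_pow, map_pow, Units.val_pow_eq_pow_val]
    rw [Finset.prod_congr rfl fun k _ => step1 k, Finset.prod_mul_distrib, ← map_prod]
    congr 1
    rw [← invOneSubPow_prod r y]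
    simpa using (map_prod (Units.coeHom ℝ⟦X⟧)
      (fun k : Fin r => PowerSeries.invOneSubPow ℝ ((k : ℕ) + 1) ^ y k) Finset.univ).symm
  rw [hprod2]
  have hcast : ((Nat.multinomial Finset.univ y : ℕ) : ℝ⟦X⟧)
      = PowerSeries.C ((Nat.multinomial Finset.univ y : ℕ) : ℝ) := by
    rw [map_natCast]
  rw [hcast, ← mul_assoc, ← map_mul, coeff_C_mul,
    invOneSubPow_val_eq_mk_sub_one_add_choose_of_pos ℝ m hm1, coeff_mk]
  have hmul : ((Nat.multinomial Finset.univ y : ℕ) : ℝ)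
      = (Nat.factorial n : ℝ) / ∏ k : Fin r, (Nat.factorial (y k) : ℝ) := by
    have hne : (∏ k : Fin r, (Nat.factorial (y k) : ℝ)) ≠ 0 := by positivity
    rw [eq_div_iff hne, mul_comm]
    have hs := Nat.multinomial_spec Finset.univ y
    rw [hysum] at hs
    exact_mod_cast hs
  have hch : Nat.choose (m - 1 + t) (m - 1) = Nat.choose (t + m - 1) t := by
    have h1 : m - 1 + t = t + m - 1 := by omega
    have h2 : (t + m - 1) - (m - 1) = t := by omega
    rw [h1, ← Nat.choose_symm (by omega : m - 1 ≤ t + m - 1), h2]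
  rw [hmul, hch]
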